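/- Let X ∈ ℝ^{n×p} have an economy-size singular value decomposition X = UΣVᵀ, where U ∈ ℝ^{n×p} satisfies UᵀU = I_p, V ∈ ℝ^{p×p} is orthogonal, and Σ ∈ ℝ^{p×p} is diagonal. Let A ∈ ℝ^{n×p}, β ∈ ℝ, Λ = Ψ(AᵀX), and G = A − XΛ + βX(XᵀX − I_p). Then Φ(VᵀXᵀGV) = (I_p − Σ²)(Φ(VᵀΛV) − βΣ²). -/
import Mathlib


open Matrix

lemma diag_diagonal_mul {p : ℕ} (d : Fin p → ℝ) (M : Matrix (Fin p) (Fin p) ℝ) :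
    Matrix.diag (Matrix.diagonal d * M) = d * Matrix.diag M := by
  funext i
  simp [Matrix.diag, Matrix.mul_apply, Matrix.diagonal_apply, Finset.sum_ite_eq]

/-- let `X = UΣVᵀ` be an economy-size SVD (`UᵀU = I_p`, `V` orthogonal,
`Σ` diagonal), `Λ = Ψ(AᵀX)` and `G = A − XΛ + βX(XᵀX − I_p)`.  Then
`Φ(VᵀXᵀGV) = (I_p − Σ²)(Φ(VᵀΛV) − βΣ²)`, where `Φ(B)` is the diagonal matrix with the
diagonal entries of `B`. -/
theorem stmt8 {n p : ℕ} (X A U : Matrix (Fin n) (Fin p) ℝ)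
    (Sig V : Matrix (Fin p) (Fin p) ℝ) (β : ℝ)
    (hU : Uᵀ * U = 1)
    (hV₁ : Vᵀ * V = 1) (hV₂ : V * Vᵀ = 1)
    (hSig : Sig.IsDiag)
    (hX : X = U * Sig * Vᵀ)
    (Λ G : Matrix _ _ ℝ)
    (hΛ : Λ = (1 / 2 : ℝ) • (Aᵀ * X + (Aᵀ * X)ᵀ))
    (hG : G = A - X * Λ + β • (X * (Xᵀ * X - 1))) :
    Matrix.diagonal (Matrix.diag (Vᵀ * Xᵀ * G * V)) =
      (1 - Sig * Sig) *
        (Matrix.diagonal (Matrix.diag (Vᵀ * Λ * V)) - β • (Sig * Sig)) := by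
  have hSigT : Sigᵀ = Sig := hSig.isSymm
  have hXtX : Xᵀ * X = V * (Sig * Sig) * Vᵀ := by
    subst hX
    calc (U * Sig * Vᵀ)ᵀ * (U * Sig * Vᵀ)
        = V * Sig * (Uᵀ * U) * (Sig * Vᵀ) := by
          rw [transpose_mul, transpose_mul, transpose_transpose, hSigT]
          simp only [Matrix.mul_assoc]
      _ = V * (Sig * Sig) * Vᵀ := by rw [hU, mul_one]; simp only [Matrix.mul_assoc]
  have hVXt : Vᵀ * Xᵀ * X = (Sig * Sig) * Vᵀ := by
    rw [Matrix.mul_assoc, hXtX,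
      show Vᵀ * (V * (Sig * Sig) * Vᵀ) = Vᵀ * V * ((Sig * Sig) * Vᵀ) by simp [Matrix.mul_assoc],
      hV₁, one_mul]
  have key : Vᵀ * Xᵀ * G * V =
      Vᵀ * Xᵀ * A * V - (Sig * Sig) * (Vᵀ * Λ * V)
        + β • ((Sig * Sig) * (Sig * Sig) - (Sig * Sig)) := by
    rw [hG]
    have h1 : Vᵀ * Xᵀ * (X * Λ) * V = (Sig * Sig) * (Vᵀ * Λ * V) := by
      rw [show Vᵀ * Xᵀ * (X * Λ) * V = (Vᵀ * Xᵀ * X) * (Λ * V) by simp [Matrix.mul_assoc],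
        hVXt]
      simp [Matrix.mul_assoc]
    have h2 : Vᵀ * Xᵀ * (X * (Xᵀ * X - 1)) * V
        = (Sig * Sig) * (Sig * Sig) - (Sig * Sig) := by
      rw [show Vᵀ * Xᵀ * (X * (Xᵀ * X - 1)) * V = (Vᵀ * Xᵀ * X) * ((Xᵀ * X - 1) * V) by
          simp [Matrix.mul_assoc], hVXt, hXtX]
      rw [Matrix.sub_mul, one_mul, Matrix.mul_sub,
        show V * (Sig * Sig) * Vᵀ * V = V * (Sig * Sig) * (Vᵀ * V) by simp [Matrix.mul_assoc],
        hV₁, mul_one,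
        show Sig * Sig * Vᵀ * (V * (Sig * Sig)) = Sig * Sig * (Vᵀ * V) * (Sig * Sig) by
          simp [Matrix.mul_assoc], hV₁, mul_one,
        show Sig * Sig * Vᵀ * V = Sig * Sig * (Vᵀ * V) by simp [Matrix.mul_assoc], hV₁, mul_one]
    rw [Matrix.mul_add, Matrix.mul_sub, Matrix.add_mul, Matrix.sub_mul, Matrix.mul_smul,
      Matrix.smul_mul, h1, h2]
  have hdiagΛ : Matrix.diag (Vᵀ * Λ * V) = Matrix.diag (Vᵀ * Xᵀ * A * V) := by
    have e1 : Vᵀ * Λ * V = (1 / 2 : ℝ) • (Vᵀ * (Aᵀ * X) * V + Vᵀ * (Aᵀ * X)ᵀ * V) := by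
      rw [hΛ]
      simp only [Matrix.mul_smul, Matrix.smul_mul, Matrix.mul_add, Matrix.add_mul]
    have e2 : Vᵀ * (Aᵀ * X)ᵀ * V = (Vᵀ * (Aᵀ * X) * V)ᵀ := by
      simp only [transpose_mul, transpose_transpose, Matrix.mul_assoc]
    have e3 : Vᵀ * Xᵀ * A * V = (Vᵀ * (Aᵀ * X) * V)ᵀ := by
      simp only [transpose_mul, transpose_transpose, Matrix.mul_assoc]
    rw [e1, e2, e3]
    funext i
    simp only [Matrix.diag, Matrix.smul_apply, Matrix.add_apply, Matrix.transpose_apply,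
      smul_eq_mul]
    ring
  have hD : Sig * Sig = Matrix.diagonal (Sig.diag * Sig.diag) := by
    conv_lhs => rw [← hSig.diagonal_diag]
    rw [diagonal_mul_diagonal]
    rfl
  have hR : (1 - Matrix.diagonal (Sig.diag * Sig.diag)) *
      (Matrix.diagonal (Matrix.diag (Vᵀ * Xᵀ * A * V)) - β • Matrix.diagonal (Sig.diag * Sig.diag))
      = Matrix.diagonal ((1 - Sig.diag * Sig.diag) *
          (Matrix.diag (Vᵀ * Xᵀ * A * V) - β • (Sig.diag * Sig.diag))) := by
    rw [← diagonal_one, ← diagonal_smul, diagonal_sub, diagonal_sub, diagonal_mul_diagonal]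
    rfl
  rw [key, hD]
  simp only [diag_add, diag_sub, diag_smul, diagonal_mul_diagonal, diag_diagonal,
    diag_diagonal_mul, hdiagΛ]
  rw [hR]
  apply congrArg
  funext i
  simp only [Pi.add_apply, Pi.sub_apply, Pi.mul_apply, Pi.smul_apply, Pi.one_apply, smul_eq_mul]
  ring
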